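/- Energy descent (Theorem 3.2, discrete form). Let P be any type, K ≥ 1, n ≥ 1, let W be a real symmetric positive semidefinite n×n matrix, 𝟙 ∈ ℝ^n the all-ones vector, and λ ≥ 0. For u = (u_1,…,u_K) ∈ (ℝ^n)^K define R(u) = ∑_{k=1}^K ⟨u_k, W(𝟙 − u_k)⟩ and Lin(v; u) = ∑_{k=1}^K ⟨v_k, W(𝟙 − 2u_k)⟩. Let F : P × (ℝ^n)^K → ℝ be any function, and let sequences (Θ^t) in P and (u^t) in (ℝ^n)^K satisfy, for every t: (i) F(Θ^{t+1}, u^t) ≤ F(Θ^t, u^t), and (ii) F(Θ^{t+1}, u^{t+1}) + λ·Lin(u^{t+1}; u^t) ≤ F(Θ^{t+1}, u^t) + λ·Lin(u^t; u^t). Then the energy Ê(Θ, u) = F(Θ, u) + λ·R(u) satisfies Ê(Θ^{t+1}, u^{t+1}) ≤ Ê(Θ^t, u^t) for every t. -/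

import Mathlib

open Real Finset Matrix

/-- **Energy descent (Theorem 3.2, discrete form).**
With `R(u) = ∑ k, ⟨u k, W(𝟙 − u k)⟩` and `Lin(v; u) = ∑ k, ⟨v k, W(𝟙 − 2 u k)⟩`
for a symmetric positive semidefinite `W` and `λ ≥ 0`, any sequences `(Θ^t)`, `(u^t)`
satisfying the alternating descent conditions (i) and (ii) make the energy
`Ê(Θ, u) = F(Θ, u) + λ·R(u)` non-increasing. -/
theorem stmt8 (P : Type*) (K n : ℕ) (hK : 1 ≤ K) (hn : 1 ≤ n)
    (W : Matrix (Fin n) (Fin n) ℝ) (hWsymm : W.IsSymm) (hWpsd : W.PosSemidef)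
    (lam : ℝ) (hlam : 0 ≤ lam)
    (F : P → (Fin K → Fin n → ℝ) → ℝ)
    (Θ : ℕ → P) (u : ℕ → Fin K → Fin n → ℝ)
    (hi : ∀ t : ℕ, F (Θ (t + 1)) (u t) ≤ F (Θ t) (u t))
    (hii : ∀ t : ℕ,
      F (Θ (t + 1)) (u (t + 1))
          + lam * ∑ k, (u (t + 1) k) ⬝ᵥ W.mulVec ((fun _ => 1) - 2 • u t k)
        ≤ F (Θ (t + 1)) (u t)
          + lam * ∑ k, (u t k) ⬝ᵥ W.mulVec ((fun _ => 1) - 2 • u t k)) :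
    ∀ t : ℕ,
      F (Θ (t + 1)) (u (t + 1))
          + lam * ∑ k, (u (t + 1) k) ⬝ᵥ W.mulVec ((fun _ => 1) - u (t + 1) k)
        ≤ F (Θ t) (u t)
          + lam * ∑ k, (u t k) ⬝ᵥ W.mulVec ((fun _ => 1) - u t k) := by
  intro t
  have key : ∀ v w : Fin n → ℝ,
      v ⬝ᵥ W.mulVec ((fun _ => 1) - v)
        ≤ w ⬝ᵥ W.mulVec ((fun _ => 1) - w)
          + (v ⬝ᵥ W.mulVec ((fun _ => 1) - 2 • w)
            - w ⬝ᵥ W.mulVec ((fun _ => 1) - 2 • w)) := by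
    intro v w
    have hq := hWpsd.dotProduct_mulVec_nonneg (v - w)
    have hsym : w ⬝ᵥ W.mulVec v = v ⬝ᵥ W.mulVec w := by
      conv_lhs => rw [Matrix.dotProduct_mulVec, ← hWsymm, Matrix.vecMul_transpose]
      exact dotProduct_comm _ _
    simp only [two_smul, Matrix.mulVec_add, dotProduct_add, Matrix.mulVec_sub,
      dotProduct_sub, sub_dotProduct, star_trivial] at hq ⊢
    linarith [hq, hsym]
  have hsum : ∑ k, (u (t+1) k) ⬝ᵥ W.mulVec ((fun _ => 1) - u (t+1) k)
      ≤ ∑ k, (u t k) ⬝ᵥ W.mulVec ((fun _ => 1) - u t k)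
        + (∑ k, (u (t+1) k) ⬝ᵥ W.mulVec ((fun _ => 1) - 2 • u t k)
          - ∑ k, (u t k) ⬝ᵥ W.mulVec ((fun _ => 1) - 2 • u t k)) := by
    rw [← Finset.sum_sub_distrib, ← Finset.sum_add_distrib]
    exact Finset.sum_le_sum fun k _ => key (u (t+1) k) (u t k)
  have h1 := hi t
  have h2 := hii t
  nlinarith [mul_le_mul_of_nonneg_left hsum hlam]
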